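/- Let A be a Novikov algebra and let I be a two-sided ideal of A. If x ∈ A and x^n ∈ I for some n ≥ 1, where x^k denotes the left-normed power, then x^{2n+2} ∈ I^2, where I^2 is the span of all products i·j with i, j ∈ I. -/

import Mathlib

/-- Left-normed power: `lpow x 1 = x`, `lpow x (k+1) = lpow x k * x`
(the value at `0` is a junk value). -/
def lpow {A : Type*} [Mul A] [Zero A] (x : A) : ℕ → A
  | 0 => 0
  | 1 => x
  | (n + 2) => lpow x (n + 1) * x

section aux
variable {A : Type*} [NonUnitalNonAssocRing A]

lemma lpow_succ (x : A) {k : ℕ} (hk : 1 ≤ k) : lpow x (k + 1) = lpow x k * x := by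
  match k, hk with
  | (m + 1), _ => rfl

lemma wx (hNov2 : ∀ x y z : A, (x * y) * z = (x * z) * y) (x : A) {k : ℕ} (hk : 1 ≤ k) :
    (lpow x k * lpow x 2 - lpow x (k + 2)) * x
      = lpow x (k + 1) * lpow x 2 - lpow x (k + 3) := by
  rw [sub_mul, hNov2, ← lpow_succ x hk, ← lpow_succ x (by omega : 1 ≤ k + 2)]

lemma lemB (hNov1 : ∀ x y z : A, (x * y) * z - x * (y * z) = (y * x) * z - y * (x * z))
    (hNov2 : ∀ x y z : A, (x * y) * z = (x * z) * y) (x : A) (j : ℕ) :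
    x * lpow x (j + 1)
      = lpow x (j + 2) + j • (lpow x j * lpow x 2 - lpow x (j + 2)) := by
  induction j with
  | zero => simp [lpow]
  | succ j ih =>
    have e1 : lpow x (j + 1 + 1) = lpow x (j + 1) * x := rfl
    have h1 : x * (lpow x (j + 1) * x)
        = (x * lpow x (j + 1)) * x
          - ((lpow x (j + 1) * x) * x - lpow x (j + 1) * (x * x)) := by
      have h := hNov1 x (lpow x (j + 1)) x
      linear_combination (norm := abel) -h
    rw [e1, h1, ih, add_mul, smul_mul_assoc]
    have hW : j • ((lpow x j * lpow x 2 - lpow x (j + 2)) * x)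
        = j • (lpow x (j + 1) * lpow x 2 - lpow x (j + 3)) := by
      rcases Nat.eq_zero_or_pos j with hj | hj
      · simp [hj]
      · rw [wx hNov2 x hj]
    rw [hW]
    have e2 : (lpow x (j + 1) * x) * x = lpow x (j + 3) := rfl
    have e3 : lpow x (j + 2) * x = lpow x (j + 3) := rfl
    have e4 : x * x = lpow x 2 := rfl
    rw [e2, e3, e4, succ_nsmul]
    abel

lemma lemA (hNov1 : ∀ x y z : A, (x * y) * z - x * (y * z) = (y * x) * z - y * (x * z))
    (hNov2 : ∀ x y z : A, (x * y) * z = (x * z) * y) (x : A) (i j : ℕ) :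
    lpow x (i + 1) * lpow x (j + 1)
      = lpow x (i + j + 2) + j • (lpow x (i + j) * lpow x 2 - lpow x (i + j + 2)) := by
  induction i with
  | zero => simpa [show lpow x 1 = x from rfl] using lemB hNov1 hNov2 x j
  | succ i ih =>
    have e1 : lpow x (i + 1 + 1) = lpow x (i + 1) * x := rfl
    rw [e1, hNov2, ih, add_mul, smul_mul_assoc]
    have hW : j • ((lpow x (i + j) * lpow x 2 - lpow x (i + j + 2)) * x)
        = j • (lpow x (i + j + 1) * lpow x 2 - lpow x (i + j + 3)) := by
      rcases Nat.eq_zero_or_pos j with hj | hj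
      · simp [hj]
      · rw [wx hNov2 x (by omega : 1 ≤ i + j)]
    rw [hW, ← lpow_succ x (by omega : 1 ≤ i + j + 2)]
    ring_nf

end aux

/-- **Lemma 3.** Let `A` be a Novikov algebra (over a field `F`)
and let `I` be a two-sided ideal of `A`.  If `x ∈ A` and `x^n ∈ I` for some
`n ≥ 1`, then `x^{2n+2} ∈ I²`, where `I²` is the span of all products `i·j`
with `i, j ∈ I`. -/
theorem novikov_lpow_mem_ideal_sq
    (F : Type*) (A : Type*) [Field F] [NonUnitalNonAssocRing A]
    [Module F A] [IsScalarTower F A A] [SMulCommClass F A A]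
    (hNov1 : ∀ x y z : A, (x * y) * z - x * (y * z) = (y * x) * z - y * (x * z))
    (hNov2 : ∀ x y z : A, (x * y) * z = (x * z) * y)
    (I : Submodule F A)
    (hIright : ∀ a ∈ I, ∀ b : A, a * b ∈ I)
    (hIleft : ∀ a ∈ I, ∀ b : A, b * a ∈ I)
    (x : A) (n : ℕ) (hn : 1 ≤ n) (hx : lpow x n ∈ I) :
    lpow x (2 * n + 2) ∈
      Submodule.span F {z : A | ∃ i ∈ I, ∃ j ∈ I, i * j = z} := by
  obtain ⟨m, rfl⟩ : ∃ m, n = m + 1 := ⟨n - 1, by omega⟩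
  have en : 2 * (m + 1) + 2 = 2 * m + 4 := by ring
  rw [en]
  -- powers of x beyond n stay in I
  have hx1 : lpow x (m + 2) ∈ I := by
    rw [show lpow x (m + 2) = lpow x (m + 1) * x from rfl]
    exact hIright _ hx x
  have hx2 : lpow x (m + 3) ∈ I := by
    rw [show lpow x (m + 3) = lpow x (m + 2) * x from rfl]
    exact hIright _ hx1 x
  have hP := lemA hNov1 hNov2 x (m + 1) (m + 1)
  have hQ := lemA hNov1 hNov2 x m (m + 2)
  -- normalize indices
  have eP : lpow x (m + 2) * lpow x (m + 2)
      = lpow x (2 * m + 4)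
        + (m + 1) • (lpow x (2 * m + 2) * lpow x 2 - lpow x (2 * m + 4)) := by
    convert hP using 3 <;> ring
  have eQ : lpow x (m + 1) * lpow x (m + 3)
      = lpow x (2 * m + 4)
        + (m + 2) • (lpow x (2 * m + 2) * lpow x 2 - lpow x (2 * m + 4)) := by
    convert hQ using 3 <;> ring
  have key : lpow x (2 * m + 4)
      = (m + 2) • (lpow x (m + 2) * lpow x (m + 2))
        - (m + 1) • (lpow x (m + 1) * lpow x (m + 3)) := by
    rw [eP, eQ, smul_add, smul_add, smul_smul, smul_smul,
      Nat.mul_comm (m + 1) (m + 2), succ_nsmul (lpow x (2 * m + 4)) (m + 1)]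
    abel
  rw [key]
  have hPmem : lpow x (m + 2) * lpow x (m + 2) ∈
      Submodule.span F {z : A | ∃ i ∈ I, ∃ j ∈ I, i * j = z} :=
    Submodule.subset_span ⟨_, hx1, _, hx1, rfl⟩
  have hQmem : lpow x (m + 1) * lpow x (m + 3) ∈
      Submodule.span F {z : A | ∃ i ∈ I, ∃ j ∈ I, i * j = z} :=
    Submodule.subset_span ⟨_, hx, _, hx2, rfl⟩
  exact sub_mem (nsmul_mem hPmem _) (nsmul_mem hQmem _)
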